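/- Fix ε > 0 and let 𝒟_m^{j,j'}(u,s) := D_m(φ^j(u)+φ^{j'}(s)) + D_m(φ^j(u)−φ^{j'}(s)) with D_m(x) = (1/m)Σ_{l=1}^m cos((l−1/2)πx), where φ^j, φ^{j'} : [0,1] → [0,1] satisfy |φ(u) − u| ≤ ρ_n with ρ_n → 0. Then for each fixed s ∈ (ε, 1−ε), sup over u with ε ≤ u ≤ s − ε and u+s ≤ 2 − ε of |𝒟_{m}^{j,j'}(u,s)| ≤ C_ε/m for n large enough, where C_ε depends only on ε. Consequently m ∫_0^{s−ε} |𝒟_{m_n}^{j,j'}(u,s)·𝒟_{m_n}^{k,k'}(u,s)| du → 0 as m_n, n → ∞. -/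

import Mathlib

open Real Finset MeasureTheory

/-- The half-integer-frequency Dirichlet-type kernel
`D_m(x) = (1/m) Σ_{l=1}^m cos((l−1/2)πx)`. -/
noncomputable def Dm (m : ℕ) (x : ℝ) : ℝ :=
  (1 / (m : ℝ)) * ∑ l ∈ Finset.Icc 1 m, Real.cos (((l : ℝ) - 1 / 2) * π * x)

/-- The sampled SIML kernel `𝒟_m^{j,j'}(u,s) = D_m(φ^j(u)+φ^{j'}(s)) + D_m(φ^j(u)−φ^{j'}(s))`. -/
noncomputable def DkerS (m : ℕ) (φ φ' : ℝ → ℝ) (u s : ℝ) : ℝ :=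
  Dm m (φ u + φ' s) + Dm m (φ u - φ' s)

lemma two_sin_mul_sum (θ : ℝ) (m : ℕ) :
    2 * Real.sin (θ/2) * ∑ l ∈ Finset.Icc 1 m, Real.cos (((l:ℝ) - 1/2) * θ)
      = Real.sin (m * θ) := by
  induction m with
  | zero => simp
  | succ k ih =>
    rw [Finset.sum_Icc_succ_top (by omega : 1 ≤ k+1)]
    have key : Real.sin (((k:ℝ)+1)*θ) - Real.sin ((k:ℝ)*θ)
        = 2 * Real.sin (θ/2) * Real.cos ((((k:ℕ)+1:ℝ) - 1/2)*θ) := by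
      have e1 : ((k:ℝ)+1)*θ = (((k:ℝ)+1) - 1/2)*θ + θ/2 := by ring
      have e2 : (k:ℝ)*θ = (((k:ℝ)+1) - 1/2)*θ - θ/2 := by ring
      rw [e1, e2, Real.sin_add, Real.sin_sub]; ring
    have : ((k+1:ℕ):ℝ) * θ = ((k:ℝ)+1)*θ := by push_cast; ring
    rw [this, mul_add, ih]
    push_cast at key ⊢
    linarith [key]

lemma abs_Dm_le (m : ℕ) (x : ℝ) (h : 0 < |Real.sin (π * x / 2)|) :
    |Dm m x| ≤ 1 / (2 * m * |Real.sin (π * x / 2)|) := by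
  have key := two_sin_mul_sum (π * x) m
  have hc : ∀ l : ℕ, ((l:ℝ) - 1/2) * π * x = ((l:ℝ) - 1/2) * (π * x) := fun l => by ring
  simp only [Dm, hc]
  set S := ∑ l ∈ Finset.Icc 1 m, Real.cos (((l:ℝ) - 1/2) * (π * x)) with hSdef
  have hS : |S| ≤ 1 / (2 * |Real.sin (π * x / 2)|) := by
    rw [le_div_iff₀ (by positivity)]
    have : |S| * (2 * |Real.sin (π * x / 2)|) = |2 * Real.sin (π * x / 2) * S| := by
      rw [abs_mul, abs_mul, abs_two]; ring
    rw [this, key]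
    exact abs_le.mpr ⟨Real.neg_one_le_sin _, Real.sin_le_one _⟩
  rw [abs_mul]
  have h1 : |1 / (m:ℝ)| = 1 / (m:ℝ) := abs_of_nonneg (by positivity)
  rw [h1]
  calc (1/(m:ℝ)) * |S| ≤ (1/(m:ℝ)) * (1 / (2 * |Real.sin (π * x / 2)|)) := by
        gcongr
    _ = 1 / (2 * m * |Real.sin (π * x / 2)|) := by
        rw [div_mul_div_comm, one_mul]; ring_nf

lemma sin_lb {y δ : ℝ} (hδ : 0 < δ) (hδ2 : δ ≤ 1/2) (h : ∀ k : ℤ, δ ≤ |y - k|) :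
    Real.sin (π * δ) ≤ |Real.sin (π * y)| := by
  have hπ := Real.pi_pos
  set k := round y with hk
  have hr : |y - k| ≤ 1/2 := abs_sub_round y
  have h1 : Real.sin (π * y) = Real.sin (π * (y - k)) * Real.cos (k * π) := by
    have : π * y = π * (y - k) + k * π := by ring
    rw [this, Real.sin_add, Real.sin_int_mul_pi, mul_zero, add_zero]
  have h2 : |Real.sin (π * y)| = |Real.sin (π * (y - k))| := by
    rw [h1, abs_mul, Real.abs_cos_int_mul_pi, mul_one]
  obtain ⟨hrl, hrr⟩ := abs_le.mp hr
  have habs : (0:ℝ) ≤ |y - (k:ℝ)| := abs_nonneg _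
  have h3 : |Real.sin (π * (y - k))| = Real.sin (π * |y - k|) := by
    rcases le_or_gt 0 (y - k) with hc | hc
    · rw [abs_of_nonneg hc, abs_of_nonneg]
      exact Real.sin_nonneg_of_nonneg_of_le_pi (by positivity) (by nlinarith)
    · rw [abs_of_neg hc, abs_of_nonpos, mul_neg, Real.sin_neg]
      exact Real.sin_nonpos_of_nonpos_of_neg_pi_le (by nlinarith) (by nlinarith)
  rw [h2, h3]
  have hd : δ ≤ |y - k| := h k
  exact Real.strictMonoOn_sin.monotoneOn
    (Set.mem_Icc.mpr ⟨by nlinarith, by nlinarith⟩)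
    (Set.mem_Icc.mpr ⟨by nlinarith, by nlinarith⟩)
    (by nlinarith : π * δ ≤ π * |y - k|)

lemma DkerS_bound {ε : ℝ} (hε : 0 < ε) (hε2 : ε < 1/2)
    (φ φ' : ℝ → ℝ) {s u : ℝ}
    (hs : s ∈ Set.Ioo ε (1-ε)) (hu0 : 0 ≤ u) (hus : u ≤ s - ε)
    (hφu : φ u ∈ Set.Icc (0:ℝ) 1) (hφ's : φ' s ∈ Set.Icc (0:ℝ) 1)
    (hcu : |φ u - u| ≤ ε/4) (hcs : |φ' s - s| ≤ ε/4) (m : ℕ) :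
    |DkerS m φ φ' u s| ≤ (2 / Real.sin (π * (ε/4))) / m := by
  have hπ := Real.pi_pos
  obtain ⟨hs1, hs2⟩ := hs
  obtain ⟨hφu1, hφu2⟩ := hφu
  obtain ⟨hφs1, hφs2⟩ := hφ's
  obtain ⟨hcu1, hcu2⟩ := abs_le.mp hcu
  obtain ⟨hcs1, hcs2⟩ := abs_le.mp hcs
  have hσ : 0 < Real.sin (π * (ε/4)) :=
    Real.sin_pos_of_pos_of_lt_pi (by positivity) (by nlinarith)
  -- lower bound for |sin (π x / 2)| at x = φ u + φ' s
  have hplus : Real.sin (π * (ε/4)) ≤ |Real.sin (π * (φ u + φ' s) / 2)| := by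
    have : π * (φ u + φ' s) / 2 = π * ((φ u + φ' s)/2) := by ring
    rw [this]
    apply sin_lb (by positivity) (by linarith)
    intro k
    rcases le_or_gt k 0 with hk | hk
    · have hk' : (k:ℝ) ≤ 0 := by exact_mod_cast hk
      rw [le_abs]; left; nlinarith
    · have hk' : (1:ℝ) ≤ (k:ℝ) := by exact_mod_cast hk
      rw [le_abs]; right; nlinarith
  -- lower bound for |sin (π x / 2)| at x = φ u - φ' s
  have hminus : Real.sin (π * (ε/4)) ≤ |Real.sin (π * (φ u - φ' s) / 2)| := by
    have : π * (φ u - φ' s) / 2 = π * ((φ u - φ' s)/2) := by ring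
    rw [this]
    apply sin_lb (by positivity) (by linarith)
    intro k
    rcases le_or_gt 0 k with hk | hk
    · have hk' : (0:ℝ) ≤ (k:ℝ) := by exact_mod_cast hk
      rw [le_abs]; right; nlinarith
    · have hk' : (k:ℝ) ≤ -1 := by exact_mod_cast (by omega : k ≤ -1)
      rw [le_abs]; left; nlinarith
  rcases Nat.eq_zero_or_pos m with hm | hm
  · subst hm; simp [DkerS, Dm]
  have hm' : (0:ℝ) < m := by exact_mod_cast hm
  have b1 := abs_Dm_le m (φ u + φ' s) (lt_of_lt_of_le hσ hplus)
  have b2 := abs_Dm_le m (φ u - φ' s) (lt_of_lt_of_le hσ hminus)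
  have c1 : 1 / (2 * m * |Real.sin (π * (φ u + φ' s) / 2)|)
      ≤ 1 / (2 * m * Real.sin (π * (ε/4))) := by gcongr
  have c2 : 1 / (2 * m * |Real.sin (π * (φ u - φ' s) / 2)|)
      ≤ 1 / (2 * m * Real.sin (π * (ε/4))) := by gcongr
  have habs : |DkerS m φ φ' u s| ≤ |Dm m (φ u + φ' s)| + |Dm m (φ u - φ' s)| :=
    abs_add_le _ _
  have e1 : 1 / (2 * (m:ℝ) * Real.sin (π * (ε/4))) + 1 / (2 * m * Real.sin (π * (ε/4)))
      = 1 / ((m:ℝ) * Real.sin (π * (ε/4))) := by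
    rw [← add_div]; rw [div_eq_div_iff (by positivity) (by positivity)]; ring
  have e2 : (2 / Real.sin (π * (ε/4))) / m = 2 / ((m:ℝ) * Real.sin (π * (ε/4))) := by
    rw [div_div]; ring_nf
  have e3 : 1 / ((m:ℝ) * Real.sin (π * (ε/4))) ≤ 2 / ((m:ℝ) * Real.sin (π * (ε/4))) := by
    gcongr; norm_num
  rw [e2]
  linarith

theorem stmt19 (ε : ℝ) (hε : 0 < ε)
    (ρ : ℕ → ℝ) (hρ : Filter.Tendsto ρ Filter.atTop (nhds 0))
    (m : ℕ → ℕ) (hm : Filter.Tendsto m Filter.atTop Filter.atTop)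
    (φj φj' φk φk' : ℕ → ℝ → ℝ)
    (hmeas : ∀ n, Measurable (φj n) ∧ Measurable (φj' n) ∧
      Measurable (φk n) ∧ Measurable (φk' n))
    (hmaps : ∀ n, ∀ u ∈ Set.Icc (0:ℝ) 1,
      φj n u ∈ Set.Icc (0:ℝ) 1 ∧ φj' n u ∈ Set.Icc (0:ℝ) 1 ∧
      φk n u ∈ Set.Icc (0:ℝ) 1 ∧ φk' n u ∈ Set.Icc (0:ℝ) 1)
    (hclose : ∀ n, ∀ u ∈ Set.Icc (0:ℝ) 1,
      |φj n u - u| ≤ ρ n ∧ |φj' n u - u| ≤ ρ n ∧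
      |φk n u - u| ≤ ρ n ∧ |φk' n u - u| ≤ ρ n) :
    (∃ C : ℝ, 0 < C ∧ ∀ s ∈ Set.Ioo ε (1 - ε), ∃ N : ℕ, ∀ n, N ≤ n →
      ∀ u : ℝ, ε ≤ u → u ≤ s - ε → u + s ≤ 2 - ε →
        |DkerS (m n) (φj n) (φj' n) u s| ≤ C / (m n)) ∧
    (∀ s ∈ Set.Ioo ε (1 - ε),
      Filter.Tendsto
        (fun n => (m n : ℝ) * ∫ u in (0:ℝ)..(s - ε),
          |DkerS (m n) (φj n) (φj' n) u s * DkerS (m n) (φk n) (φk' n) u s|)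
        Filter.atTop (nhds 0)) := by
  have hπ := Real.pi_pos
  set C : ℝ := max (2 / Real.sin (π * (ε/4))) 1 with hC
  constructor
  · refine ⟨C, lt_of_lt_of_le one_pos (le_max_right _ _), ?_⟩
    intro s hs
    obtain ⟨hs1, hs2⟩ := hs
    have hε2 : ε < 1/2 := by linarith
    obtain ⟨N, hN⟩ := Metric.tendsto_atTop.mp hρ (ε/4) (by positivity)
    refine ⟨N, fun n hn u hu1 hu2 hu3 => ?_⟩
    have hρn : ρ n ≤ ε/4 := by
      have := hN n hn
      rw [Real.dist_eq, sub_zero] at this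
      exact (le_abs_self _).trans this.le
    have hu01 : u ∈ Set.Icc (0:ℝ) 1 := ⟨by linarith, by linarith⟩
    have hs01 : s ∈ Set.Icc (0:ℝ) 1 := ⟨by linarith, by linarith⟩
    have key := DkerS_bound hε hε2 (φj n) (φj' n) ⟨hs1, hs2⟩ (by linarith) hu2
      ((hmaps n u hu01).1) ((hmaps n s hs01).2.1)
      ((hclose n u hu01).1.trans hρn) ((hclose n s hs01).2.1.trans hρn) (m n)
    refine key.trans ?_
    rcases Nat.eq_zero_or_pos (m n) with h0 | h0
    · simp [h0]
    · have hmn : (0:ℝ) < m n := by exact_mod_cast h0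
      gcongr
      exact le_max_left _ _
  · intro s hs
    obtain ⟨hs1, hs2⟩ := hs
    have hε2 : ε < 1/2 := by linarith
    set σ := Real.sin (π * (ε/4)) with hσdef
    have hσ : 0 < σ := Real.sin_pos_of_pos_of_lt_pi (by positivity) (by nlinarith)
    set K := 2 / σ with hKdef
    have hK : 0 < K := by positivity
    obtain ⟨N, hN⟩ := Metric.tendsto_atTop.mp hρ (ε/4) (by positivity)
    apply squeeze_zero' (g := fun n => K^2 * (s - ε) / (m n))
    · filter_upwards with n
      exact mul_nonneg (Nat.cast_nonneg _)
        (intervalIntegral.integral_nonneg (by linarith) (fun u _ => abs_nonneg _))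
    · have hev1 : ∀ᶠ n in Filter.atTop, N ≤ n :=
        Filter.eventually_atTop.mpr ⟨N, fun n h => h⟩
      have hev2 : ∀ᶠ n in Filter.atTop, 1 ≤ m n := hm.eventually_ge_atTop 1
      filter_upwards [hev1, hev2] with n hn hmn
      have hρn : ρ n ≤ ε/4 := by
        have := hN n hn
        rw [Real.dist_eq, sub_zero] at this
        exact (le_abs_self _).trans this.le
      have hs01 : s ∈ Set.Icc (0:ℝ) 1 := ⟨by linarith, by linarith⟩
      have hm' : (0:ℝ) < m n := by exact_mod_cast hmn
      have hb : ∀ x ∈ Set.uIoc (0:ℝ) (s-ε),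
          ‖|DkerS (m n) (φj n) (φj' n) x s * DkerS (m n) (φk n) (φk' n) x s|‖
            ≤ (K/(m n))^2 := by
        intro x hx
        rw [Set.uIoc_of_le (by linarith)] at hx
        obtain ⟨hx1, hx2⟩ := hx
        have hx01 : x ∈ Set.Icc (0:ℝ) 1 := ⟨hx1.le, by linarith⟩
        have b1 := DkerS_bound hε hε2 (φj n) (φj' n) ⟨hs1, hs2⟩ hx1.le hx2
          ((hmaps n x hx01).1) ((hmaps n s hs01).2.1)
          ((hclose n x hx01).1.trans hρn) ((hclose n s hs01).2.1.trans hρn) (m n)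
        have b2 := DkerS_bound hε hε2 (φk n) (φk' n) ⟨hs1, hs2⟩ hx1.le hx2
          ((hmaps n x hx01).2.2.1) ((hmaps n s hs01).2.2.2)
          ((hclose n x hx01).2.2.1.trans hρn)
          ((hclose n s hs01).2.2.2.trans hρn) (m n)
        rw [Real.norm_eq_abs, abs_abs, abs_mul, pow_two]
        exact mul_le_mul b1 b2 (abs_nonneg _) (by positivity)
      have hint := intervalIntegral.norm_integral_le_of_norm_le_const hb
      have h1 : (∫ u in (0:ℝ)..(s-ε),
          |DkerS (m n) (φj n) (φj' n) u s * DkerS (m n) (φk n) (φk' n) u s|)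
            ≤ (K/(m n))^2 * (s - ε) := by
        calc (∫ u in (0:ℝ)..(s-ε),
            |DkerS (m n) (φj n) (φj' n) u s * DkerS (m n) (φk n) (φk' n) u s|)
            ≤ ‖∫ u in (0:ℝ)..(s-ε),
              |DkerS (m n) (φj n) (φj' n) u s * DkerS (m n) (φk n) (φk' n) u s|‖ :=
              le_abs_self _
          _ ≤ (K/(m n))^2 * |s - ε - 0| := hint
          _ = (K/(m n))^2 * (s-ε) := by rw [sub_zero, abs_of_nonneg (by linarith)]
      calc (m n : ℝ) * ∫ u in (0:ℝ)..(s-ε),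
            |DkerS (m n) (φj n) (φj' n) u s * DkerS (m n) (φk n) (φk' n) u s|
          ≤ (m n : ℝ) * ((K/(m n))^2 * (s-ε)) :=
            mul_le_mul_of_nonneg_left h1 (Nat.cast_nonneg _)
        _ = K^2 * (s-ε)/(m n) := by field_simp
    · exact tendsto_const_nhds.div_atTop (tendsto_natCast_atTop_atTop.comp hm)
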